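/- For every t with |t| < 1: (π/2)·E[|X_t|·|X|] = (π/2 − arccos t)·t + √(1 − t²). Consequently the derivative in t of (π/2)·E[|X_t|·|X|] equals π/2 − arccos t, and its second derivative in t equals 1/√(1 − t²). -/

import Mathlib

open MeasureTheory ProbabilityTheory Real Filter
open scoped NNReal ENNReal

noncomputable section

/-- The law of a pair of independent standard real Gaussians. -/
def gauss2 : Measure (ℝ × ℝ) := (gaussianReal 0 1).prod (gaussianReal 0 1)

/-- `g(t) = (π/2)·E[|X_t|·|X|]` where `X_t = t X + √(1−t²) Y` with `X, Y`
independent standard Gaussians. -/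
def g12 (t : ℝ) : ℝ :=
  (π / 2) * ∫ p : ℝ × ℝ, |t * p.1 + Real.sqrt (1 - t ^ 2) * p.2| * |p.1| ∂gauss2

end

/-! ### Auxiliary lemmas -/

lemma radial_int12 : ∫ r in Set.Ioi (0:ℝ), r ^ 3 * rexp (-r ^ 2 / 2) = 2 := by
  have hderiv : ∀ x ∈ Set.Ici (0:ℝ),
      HasDerivAt (fun r : ℝ => -(r ^ 2 + 2) * rexp (-r ^ 2 / 2)) (x ^ 3 * rexp (-x ^ 2 / 2)) x := by
    intro x _
    have h1 : HasDerivAt (fun r : ℝ => -(r ^ 2 + 2)) (-(2 * x)) x := by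
      have := ((hasDerivAt_pow 2 x).add_const 2).fun_neg
      simpa using this
    have h2 : HasDerivAt (fun r : ℝ => -r ^ 2 / 2) (-x) x := by
      have := ((hasDerivAt_pow 2 x).fun_neg).div_const 2
      refine this.congr_deriv ?_
      ring
    have h3 : HasDerivAt (fun r : ℝ => rexp (-r ^ 2 / 2)) (rexp (-x ^ 2 / 2) * (-x)) x :=
      (Real.hasDerivAt_exp _).comp x h2
    have := h1.fun_mul h3
    refine this.congr_deriv ?_
    ring
  have hint : IntegrableOn (fun r : ℝ => r ^ 3 * rexp (-r ^ 2 / 2)) (Set.Ioi 0) := by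
    have h0 : IntegrableOn (fun r : ℝ => r ^ (3:ℝ) * rexp (-(1/2) * r ^ 2)) (Set.Ioi 0) :=
      integrableOn_rpow_mul_exp_neg_mul_sq (by norm_num) (by norm_num)
    refine h0.congr_fun (fun x hx => ?_) measurableSet_Ioi
    rw [← Real.rpow_natCast x 3]
    norm_num
    left; ring
  have htend : Tendsto (fun r : ℝ => -(r ^ 2 + 2) * rexp (-r ^ 2 / 2)) atTop (nhds 0) := by
    have key : Tendsto (fun u : ℝ => -(2 * u + 2) * rexp (-u)) atTop (nhds 0) := by
      have h1 : Tendsto (fun u : ℝ => u ^ 1 * rexp (-u)) atTop (nhds 0) :=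
        tendsto_pow_mul_exp_neg_atTop_nhds_zero 1
      have h2 : Tendsto (fun u : ℝ => rexp (-u)) atTop (nhds 0) :=
        Real.tendsto_exp_neg_atTop_nhds_zero
      have h3 := (h1.const_mul (-2)).add (h2.const_mul (-2))
      have heq : (fun u : ℝ => -(2 * u + 2) * rexp (-u))
          = fun u => -2 * (u ^ 1 * rexp (-u)) + -2 * rexp (-u) := by funext u; ring
      rw [heq]
      simpa using h3
    have hcomp : Tendsto (fun r : ℝ => r ^ 2 / 2) atTop atTop := by
      exact (tendsto_pow_atTop (by norm_num)).atTop_div_const (by norm_num)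
    have := key.comp hcomp
    have heq : (fun r : ℝ => -(2 * (r ^ 2 / 2) + 2) * rexp (-(r ^ 2 / 2)))
        = fun r : ℝ => -(r ^ 2 + 2) * rexp (-r ^ 2 / 2) := by
      funext r; rw [neg_div]; ring_nf
    rw [← heq]
    exact this
  have := integral_Ioi_of_hasDerivAt_of_tendsto'
    (f := fun r : ℝ => -(r ^ 2 + 2) * rexp (-r ^ 2 / 2))
    (f' := fun r : ℝ => r ^ 3 * rexp (-r ^ 2 / 2)) hderiv hint htend
  rw [this]
  norm_num

lemma hasDerivAt_F12 (φ x : ℝ) :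
    HasDerivAt (fun y => Real.sin (2 * y - φ) / 4 + y * Real.cos φ / 2)
      (Real.cos (x - φ) * Real.cos x) x := by
  have h1 : HasDerivAt (fun y : ℝ => 2 * y - φ) 2 x := by
    simpa using ((hasDerivAt_id x).const_mul 2).sub_const φ
  have h2 : HasDerivAt (fun y : ℝ => Real.sin (2 * y - φ)) (Real.cos (2 * x - φ) * 2) x :=
    by have := (Real.hasDerivAt_sin (2 * x - φ)).comp x h1; exact this
  have h3 := (h2.div_const 4).fun_add (((hasDerivAt_id x).mul_const (Real.cos φ)).div_const 2)
  refine h3.congr_deriv ?_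
  have e1 : Real.cos (2 * x - φ) = Real.cos x * Real.cos (x - φ) - Real.sin x * Real.sin (x - φ) := by
    rw [show 2 * x - φ = x + (x - φ) by ring, Real.cos_add]
  have e2 : Real.cos φ = Real.cos x * Real.cos (x - φ) + Real.sin x * Real.sin (x - φ) := by
    conv_lhs => rw [show φ = x - (x - φ) by ring]
    rw [Real.cos_sub]
  rw [e1, e2]
  ring

lemma angular_int12 (t : ℝ) (ht : |t| < 1) :
    ∫ θ in Set.Ioo (-π) π, |t * Real.cos θ + Real.sqrt (1 - t ^ 2) * Real.sin θ| * |Real.cos θ|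
      = π * t + 2 * Real.sqrt (1 - t ^ 2) - 2 * t * Real.arccos t := by
  obtain ⟨ht1, ht2⟩ := abs_lt.mp ht
  set φ := Real.arccos t with hφ
  have hcos : Real.cos φ = t := Real.cos_arccos ht1.le ht2.le
  have hsin : Real.sin φ = Real.sqrt (1 - t ^ 2) := by
    rw [hφ, Real.sin_arccos]
  have hφ0 : 0 < φ := Real.arccos_pos.mpr ht2
  have hφπ : φ < π := by
    rw [hφ, Real.arccos_eq_pi_div_two_sub_arcsin]
    have := Real.neg_pi_div_two_lt_arcsin.mpr ht1
    linarith
  set h : ℝ → ℝ := fun θ => |Real.cos (θ - φ)| * |Real.cos θ| with hh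
  have hint_eq : ∀ θ : ℝ, |t * Real.cos θ + Real.sqrt (1 - t ^ 2) * Real.sin θ| * |Real.cos θ| = h θ := by
    intro θ
    rw [hh]
    congr 1
    rw [Real.cos_sub, ← hsin]
    rw [← hcos]
    ring_nf
  simp only [hint_eq]
  have hcont : Continuous h :=
    ((Real.continuous_cos.comp (continuous_id.sub continuous_const)).abs).mul
      Real.continuous_cos.abs
  have hper : Function.Periodic h π := by
    intro θ
    rw [hh]
    simp only
    rw [show θ + π - φ = (θ - φ) + π by ring, Real.cos_add_pi, Real.cos_add_pi, abs_neg, abs_neg]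
  have hIoo : ∫ θ in Set.Ioo (-π) π, h θ = ∫ θ in (-π)..π, h θ := by
    rw [intervalIntegral.integral_of_le (by linarith [Real.pi_pos]),
      MeasureTheory.integral_Ioc_eq_integral_Ioo]
  rw [hIoo]
  have hii : ∀ a b : ℝ, IntervalIntegrable h volume a b := fun a b => hcont.intervalIntegrable a b
  have hsplit : ∫ θ in (-π)..π, h θ = (∫ θ in (-π)..(0:ℝ), h θ) + ∫ θ in (0:ℝ)..π, h θ :=
    (intervalIntegral.integral_add_adjacent_intervals (hii _ _) (hii _ _)).symm
  have hshift1 : ∫ θ in (-π)..(0:ℝ), h θ = ∫ θ in (0:ℝ)..π, h θ := by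
    have := hper.intervalIntegral_add_eq (-π) 0
    simpa using this
  have hshift2 : ∫ θ in (0:ℝ)..π, h θ = ∫ θ in (φ - π/2)..(φ + π/2), h θ := by
    have := hper.intervalIntegral_add_eq 0 (φ - π/2)
    rw [show φ - π/2 + π = φ + π/2 by ring, zero_add] at this
    exact this
  have hsplit2 : ∫ θ in (φ - π/2)..(φ + π/2), h θ
      = (∫ θ in (φ - π/2)..(π/2), h θ) + ∫ θ in (π/2)..(φ + π/2), h θ :=
    (intervalIntegral.integral_add_adjacent_intervals (hii _ _) (hii _ _)).symm
  have hI1 : ∫ θ in (φ - π/2)..(π/2), h θ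
      = ∫ θ in (φ - π/2)..(π/2), Real.cos (θ - φ) * Real.cos θ := by
    refine intervalIntegral.integral_congr fun θ hθ => ?_
    rw [Set.uIcc_of_le (by linarith)] at hθ
    obtain ⟨hθ1, hθ2⟩ := hθ
    have hc1 : 0 ≤ Real.cos (θ - φ) :=
      Real.cos_nonneg_of_mem_Icc ⟨by linarith, by linarith⟩
    have hc2 : 0 ≤ Real.cos θ :=
      Real.cos_nonneg_of_mem_Icc ⟨by linarith, by linarith⟩
    rw [hh]
    simp only
    rw [abs_of_nonneg hc1, abs_of_nonneg hc2]
  have hI2 : ∫ θ in (π/2)..(φ + π/2), h θ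
      = ∫ θ in (π/2)..(φ + π/2), -(Real.cos (θ - φ) * Real.cos θ) := by
    refine intervalIntegral.integral_congr fun θ hθ => ?_
    rw [Set.uIcc_of_le (by linarith)] at hθ
    obtain ⟨hθ1, hθ2⟩ := hθ
    have hc1 : 0 ≤ Real.cos (θ - φ) :=
      Real.cos_nonneg_of_mem_Icc ⟨by linarith, by linarith⟩
    have hc2 : Real.cos θ ≤ 0 := by
      apply Real.cos_nonpos_of_pi_div_two_le_of_le hθ1
      linarith [Real.pi_pos]
    rw [hh]
    simp only
    rw [abs_of_nonneg hc1, abs_of_nonpos hc2]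
    ring
  have hftc1 : ∫ θ in (φ - π/2)..(π/2), Real.cos (θ - φ) * Real.cos θ
      = (Real.sin (2 * (π/2) - φ) / 4 + (π/2) * Real.cos φ / 2)
        - (Real.sin (2 * (φ - π/2) - φ) / 4 + (φ - π/2) * Real.cos φ / 2) :=
    intervalIntegral.integral_eq_sub_of_hasDerivAt (fun x _ => hasDerivAt_F12 φ x)
      (((Real.continuous_cos.comp (continuous_id.sub continuous_const)).mul
        Real.continuous_cos).intervalIntegrable _ _)
  have hftc2 : ∫ θ in (π/2)..(φ + π/2), Real.cos (θ - φ) * Real.cos θ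
      = (Real.sin (2 * (φ + π/2) - φ) / 4 + (φ + π/2) * Real.cos φ / 2)
        - (Real.sin (2 * (π/2) - φ) / 4 + (π/2) * Real.cos φ / 2) :=
    intervalIntegral.integral_eq_sub_of_hasDerivAt (fun x _ => hasDerivAt_F12 φ x)
      (((Real.continuous_cos.comp (continuous_id.sub continuous_const)).mul
        Real.continuous_cos).intervalIntegrable _ _)
  have hs1 : Real.sin (2 * (π/2) - φ) = Real.sin φ := by
    rw [show 2 * (π/2) - φ = π - φ by ring, Real.sin_pi_sub]
  have hs2 : Real.sin (2 * (φ - π/2) - φ) = -Real.sin φ := by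
    rw [show 2 * (φ - π/2) - φ = φ - π by ring, Real.sin_sub_pi]
  have hs3 : Real.sin (2 * (φ + π/2) - φ) = -Real.sin φ := by
    rw [show 2 * (φ + π/2) - φ = φ + π by ring, Real.sin_add_pi]
  rw [hsplit, hshift1, hshift2, hsplit2, hI1, hI2, intervalIntegral.integral_neg, hftc1, hftc2,
    hs1, hs2, hs3, hcos, hsin]
  ring

lemma gauss2_eq_withDensity : gauss2
    = ((volume : Measure ℝ).prod volume).withDensity
      (fun p => gaussianPDF 0 1 p.1 * gaussianPDF 0 1 p.2) := by
  refine Measure.prod_eq fun s t hs ht => ?_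
  rw [withDensity_apply _ (hs.prod ht), ← Measure.prod_restrict,
    lintegral_prod_mul (measurable_gaussianPDF 0 1).aemeasurable
      (measurable_gaussianPDF 0 1).aemeasurable,
    gaussianReal_apply 0 one_ne_zero s, gaussianReal_apply 0 one_ne_zero t]

lemma integral_gauss2 (F : ℝ × ℝ → ℝ) :
    ∫ p, F p ∂gauss2
      = ∫ p : ℝ × ℝ, (gaussianPDFReal 0 1 p.1 * gaussianPDFReal 0 1 p.2) * F p
          ∂((volume : Measure ℝ).prod volume) := by
  rw [gauss2_eq_withDensity]
  have hden : (fun p : ℝ × ℝ => gaussianPDF 0 1 p.1 * gaussianPDF 0 1 p.2)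
      = fun p : ℝ × ℝ =>
        (((gaussianPDFReal 0 1 p.1).toNNReal * (gaussianPDFReal 0 1 p.2).toNNReal : ℝ≥0) : ℝ≥0∞) := by
    funext p
    rw [ENNReal.coe_mul]
    rfl
  have hmeas : Measurable fun p : ℝ × ℝ =>
      (gaussianPDFReal 0 1 p.1).toNNReal * (gaussianPDFReal 0 1 p.2).toNNReal := by
    exact (((measurable_gaussianPDFReal 0 1).comp measurable_fst).real_toNNReal.mul
      ((measurable_gaussianPDFReal 0 1).comp measurable_snd).real_toNNReal)
  rw [hden, integral_withDensity_eq_integral_smul hmeas F]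
  congr 1
  funext p
  rw [NNReal.smul_def, NNReal.coe_mul,
    Real.coe_toNNReal _ (gaussianPDFReal_nonneg 0 1 p.1),
    Real.coe_toNNReal _ (gaussianPDFReal_nonneg 0 1 p.2), smul_eq_mul]

lemma gaussianPDFReal_std12 (x : ℝ) :
    gaussianPDFReal 0 1 x = (Real.sqrt (2 * π))⁻¹ * rexp (-x ^ 2 / 2) := by
  simp [gaussianPDFReal]

lemma key_integral12 (t : ℝ) (ht : |t| < 1) :
    ∫ p : ℝ × ℝ, |t * p.1 + Real.sqrt (1 - t ^ 2) * p.2| * |p.1| ∂gauss2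
      = ((2 * π)⁻¹ * 2) * (π * t + 2 * Real.sqrt (1 - t ^ 2) - 2 * t * Real.arccos t) := by
  set b := Real.sqrt (1 - t ^ 2) with hb
  rw [integral_gauss2]
  rw [← MeasureTheory.Measure.volume_eq_prod]
  rw [← integral_comp_polarCoord_symm
    (fun p : ℝ × ℝ => gaussianPDFReal 0 1 p.1 * gaussianPDFReal 0 1 p.2
      * (|t * p.1 + b * p.2| * |p.1|))]
  have htarget : polarCoord.target = Set.Ioi (0:ℝ) ×ˢ Set.Ioo (-π) π := rfl
  rw [htarget]
  rw [setIntegral_congr_fun (measurableSet_Ioi.prod measurableSet_Ioo)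
    (g := fun p : ℝ × ℝ => ((2 * π)⁻¹ * (p.1 ^ 3 * rexp (-p.1 ^ 2 / 2)))
      * (|t * Real.cos p.2 + b * Real.sin p.2| * |Real.cos p.2|)) ?_]
  · rw [MeasureTheory.Measure.volume_eq_prod,
      setIntegral_prod_mul (fun r : ℝ => (2 * π)⁻¹ * (r ^ 3 * rexp (-r ^ 2 / 2)))
        (fun θ : ℝ => |t * Real.cos θ + b * Real.sin θ| * |Real.cos θ|)]
    rw [integral_const_mul, radial_int12, angular_int12 t ht]
  · rintro ⟨r, θ⟩ ⟨hr, hθ⟩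
    simp only [Set.mem_Ioi] at hr
    have hsymm : polarCoord.symm (r, θ) = (r * Real.cos θ, r * Real.sin θ) := rfl
    dsimp only
    rw [hsymm]
    simp only [smul_eq_mul]
    rw [gaussianPDFReal_std12, gaussianPDFReal_std12]
    have hexp : rexp (-(r * Real.cos θ) ^ 2 / 2) * rexp (-(r * Real.sin θ) ^ 2 / 2)
        = rexp (-r ^ 2 / 2) := by
      rw [← Real.exp_add]
      congr 1
      have := Real.sin_sq_add_cos_sq θ
      nlinarith
    have habs1 : |t * (r * Real.cos θ) + b * (r * Real.sin θ)|
        = r * |t * Real.cos θ + b * Real.sin θ| := by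
      rw [show t * (r * Real.cos θ) + b * (r * Real.sin θ)
        = r * (t * Real.cos θ + b * Real.sin θ) by ring, abs_mul, abs_of_pos hr]
    have habs2 : |r * Real.cos θ| = r * |Real.cos θ| := by
      rw [abs_mul, abs_of_pos hr]
    have h2π : (Real.sqrt (2 * π))⁻¹ * (Real.sqrt (2 * π))⁻¹ = (2 * π)⁻¹ := by
      rw [← mul_inv, Real.mul_self_sqrt (by positivity)]
    calc r * ((Real.sqrt (2 * π))⁻¹ * rexp (-(r * Real.cos θ) ^ 2 / 2)
          * ((Real.sqrt (2 * π))⁻¹ * rexp (-(r * Real.sin θ) ^ 2 / 2))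
          * (|t * (r * Real.cos θ) + b * (r * Real.sin θ)| * |r * Real.cos θ|))
        = ((Real.sqrt (2 * π))⁻¹ * (Real.sqrt (2 * π))⁻¹)
          * (rexp (-(r * Real.cos θ) ^ 2 / 2) * rexp (-(r * Real.sin θ) ^ 2 / 2))
          * (r * (|t * (r * Real.cos θ) + b * (r * Real.sin θ)| * |r * Real.cos θ|)) := by ring
      _ = _ := by
          rw [h2π, hexp, habs1, habs2]
          ring

/-- The explicit formula for `g12` on `(-1, 1)`. -/
lemma g12_formula (s : ℝ) (hs : |s| < 1) :
    g12 s = (π / 2 - Real.arccos s) * s + Real.sqrt (1 - s ^ 2) := by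
  rw [g12, key_integral12 s hs]
  have hπ : (π : ℝ) ≠ 0 := Real.pi_ne_zero
  field_simp
  ring

lemma hasDerivAt_formula12 (s : ℝ) (hs : |s| < 1) :
    HasDerivAt (fun y : ℝ => (π / 2 - Real.arccos y) * y + Real.sqrt (1 - y ^ 2))
      (π / 2 - Real.arccos s) s := by
  obtain ⟨h1, h2⟩ := abs_lt.mp hs
  have hpos : 0 < 1 - s ^ 2 := by nlinarith
  have hsq_pos : 0 < Real.sqrt (1 - s ^ 2) := Real.sqrt_pos.mpr hpos
  have ha : HasDerivAt (fun y : ℝ => π / 2 - Real.arccos y) (1 / Real.sqrt (1 - s ^ 2)) s := by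
    have := (hasDerivAt_const s (π / 2)).fun_sub
      (Real.hasDerivAt_arccos (by linarith) (by linarith))
    simpa using this
  have hmul : HasDerivAt (fun y : ℝ => (π / 2 - Real.arccos y) * y)
      ((1 / Real.sqrt (1 - s ^ 2)) * s + (π / 2 - Real.arccos s) * 1) s :=
    ha.mul (hasDerivAt_id s)
  have hin : HasDerivAt (fun y : ℝ => 1 - y ^ 2) (-(2 * s)) s := by
    have := ((hasDerivAt_pow 2 s).const_sub 1)
    simpa using this
  have hsq : HasDerivAt (fun y : ℝ => Real.sqrt (1 - y ^ 2))
      ((1 / (2 * Real.sqrt (1 - s ^ 2))) * (-(2 * s))) s :=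
    (Real.hasDerivAt_sqrt hpos.ne').comp s hin
  have htot := hmul.fun_add hsq
  refine htot.congr_deriv ?_
  field_simp
  ring

/-- explicit formula `(π/2)·E[|X_t||X|] = (π/2 − arccos t)·t + √(1−t²)`
together with its first and second derivatives in `t`. -/
theorem expected_abs_product_formula (t : ℝ) (ht : |t| < 1) :
    g12 t = (π / 2 - Real.arccos t) * t + Real.sqrt (1 - t ^ 2) ∧
    deriv g12 t = π / 2 - Real.arccos t ∧
    deriv (deriv g12) t = 1 / Real.sqrt (1 - t ^ 2) := by
  have hUopen : IsOpen {s : ℝ | |s| < 1} := isOpen_lt continuous_abs continuous_const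
  have hev : ∀ s : ℝ, |s| < 1 → g12 =ᶠ[nhds s]
      fun y : ℝ => (π / 2 - Real.arccos y) * y + Real.sqrt (1 - y ^ 2) := by
    intro s hs
    exact Filter.eventually_of_mem (hUopen.mem_nhds hs) (fun u hu => g12_formula u hu)
  have hderiv_g : ∀ s : ℝ, |s| < 1 → deriv g12 s = π / 2 - Real.arccos s := by
    intro s hs
    rw [(hev s hs).deriv_eq]
    exact (hasDerivAt_formula12 s hs).deriv
  refine ⟨g12_formula t ht, hderiv_g t ht, ?_⟩
  have hev2 : deriv g12 =ᶠ[nhds t] fun s : ℝ => π / 2 - Real.arccos s :=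
    Filter.eventually_of_mem (hUopen.mem_nhds ht) (fun s hs => hderiv_g s hs)
  rw [hev2.deriv_eq]
  obtain ⟨h1, h2⟩ := abs_lt.mp ht
  have hd : HasDerivAt (fun s : ℝ => π / 2 - Real.arccos s) (1 / Real.sqrt (1 - t ^ 2)) t := by
    have := (hasDerivAt_const t (π / 2)).fun_sub
      (Real.hasDerivAt_arccos (by linarith) (by linarith))
    simpa using this
  exact hd.deriv
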